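/- Let P be a polynomial with complex coefficients, and let γ : ℝ → ℂ be a nonconstant solution of the differential equation γ'(t) = P(γ(t)) which is periodic with period T > 0. Let ζ be a simple zero of P (P(ζ) = 0, P'(ζ) ≠ 0) such that the winding number of the closed loop γ|[0,T] around ζ equals 1, while its winding number around every other zero of P equals 0. Then T = 2πi/P'(ζ); equivalently, P'(ζ) = 2πi/T (in particular P'(ζ) is purely imaginary with positive imaginary part). -/

import Mathlib

open Polynomial Set

lemma aux15_antideriv (B : Polynomial ℂ) : ∃ Cq : Polynomial ℂ, Cq.derivative = B := by
  induction B using Polynomial.induction_on with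
  | C a => exact ⟨C a * X, by simp⟩
  | add p q hp hq =>
    obtain ⟨cp, hcp⟩ := hp; obtain ⟨cq, hcq⟩ := hq
    exact ⟨cp + cq, by simp [hcp, hcq]⟩
  | monomial n a _ =>
    refine ⟨C (a / (n + 2)) * X ^ (n + 2), ?_⟩
    rw [derivative_C_mul, derivative_X_pow, ← mul_assoc, ← C_mul]
    have h : a / (↑n + 2) * ((n + 2 : ℕ) : ℂ) = a := by
      have h2 : ((n:ℂ) + 2) ≠ 0 := by exact_mod_cast (by omega : (n + 2 : ℕ) ≠ 0)
      push_cast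
      field_simp
    rw [h]
    congr 1

section

variable {P : Polynomial ℂ} {γ : ℝ → ℂ} {T : ℝ}

lemma aux15_int_zero (hper : Function.Periodic γ T)
    (G : ℂ → ℂ) (F : ℝ → ℂ) (hd : ∀ t : ℝ, HasDerivAt (fun s => G (γ s)) (F t) t)
    (hF : Continuous F) : ∫ t in (0:ℝ)..T, F t = 0 := by
  rw [intervalIntegral.integral_eq_sub_of_hasDerivAt (fun t _ => hd t)
    (hF.intervalIntegrable 0 T)]
  have : γ T = γ 0 := by simpa using hper 0
  rw [this, sub_self]

lemma aux15_cont (hode : ∀ t : ℝ, HasDerivAt γ (eval (γ t) P) t) : Continuous γ :=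
  continuous_iff_continuousAt.mpr fun t => (hode t).continuousAt

lemma aux15_poly_int (hode : ∀ t : ℝ, HasDerivAt γ (eval (γ t) P) t)
    (hper : Function.Periodic γ T) (B : Polynomial ℂ) :
    ∫ t in (0:ℝ)..T, eval (γ t) P * eval (γ t) B = 0 := by
  obtain ⟨Cq, hCq⟩ := aux15_antideriv B
  refine aux15_int_zero hper (fun z => eval z Cq) _ (fun t => ?_) ?_
  · have h := (Cq.hasDerivAt (γ t)).comp t (hode t)
    rw [hCq] at h
    rw [mul_comm] at h; exact h
  · exact ((P.continuous).comp (aux15_cont hode)).mul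
      ((B.continuous).comp (aux15_cont hode))

-- antiderivative for 1/(z-p)^(n+2)
lemma aux15_pow_int (hode : ∀ t : ℝ, HasDerivAt γ (eval (γ t) P) t)
    (hper : Function.Periodic γ T) (p : ℂ) (havoid : ∀ t, γ t ≠ p) (n : ℕ) :
    ∫ t in (0:ℝ)..T, eval (γ t) P / (γ t - p) ^ (n + 2) = 0 := by
  have hγ := aux15_cont hode
  have hsub : ∀ t : ℝ, γ t - p ≠ 0 := fun t => sub_ne_zero.mpr (havoid t)
  refine aux15_int_zero hper (fun z => (-(n + 1 : ℂ))⁻¹ * ((z - p) ^ (n + 1))⁻¹) _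
    (fun t => ?_) ?_
  · have hz := hsub t
    have h1 : HasDerivAt (fun z : ℂ => z - p) 1 (γ t) := (hasDerivAt_id _).sub_const p
    have h2 := h1.pow (n + 1)
    have h3 := (h2.inv (pow_ne_zero _ hz)).const_mul (-(n + 1 : ℂ))⁻¹
    have h4 := h3.comp t (hode t)
    simp only [Function.comp_def, mul_one, Nat.add_sub_cancel, Pi.pow_apply] at h4
    refine h4.congr_deriv (Eq.symm ?_)
    have ha : ((n : ℂ) + 1) ≠ 0 := by
      exact_mod_cast (by omega : (n + 1 : ℕ) ≠ 0)
    have hcast : ((n + 1 : ℕ) : ℂ) = (n : ℂ) + 1 := by push_cast; ring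
    rw [hcast, inv_neg, neg_div, neg_mul_neg, ← mul_div_assoc, ← mul_assoc,
      inv_mul_cancel₀ ha, one_mul, ← pow_mul,
      show (n + 1) * 2 = n + (n + 2) by ring]
    conv_rhs => rw [pow_add, div_mul_cancel_left₀ (pow_ne_zero n hz)]
    rw [div_eq_mul_inv, mul_comm]
  · refine ((P.continuous).comp hγ).div (((hγ.sub continuous_const).pow _)) ?_
    exact fun t => pow_ne_zero _ (hsub t)

lemma aux15_J (hode : ∀ t : ℝ, HasDerivAt γ (eval (γ t) P) t)
    (hper : Function.Periodic γ T) (p : ℂ) (havoid : ∀ t, γ t ≠ p)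
    (hw : ∫ t in (0:ℝ)..T, eval (γ t) P / (γ t - p) = 0) :
    ∀ (n : ℕ) (A : Polynomial ℂ),
      ∫ t in (0:ℝ)..T, eval (γ t) P * (eval (γ t) A / (γ t - p) ^ n) = 0 := by
  have hγ := aux15_cont hode
  have hsub : ∀ t : ℝ, γ t - p ≠ 0 := fun t => sub_ne_zero.mpr (havoid t)
  intro n
  induction n with
  | zero =>
    intro A
    simpa using aux15_poly_int hode hper A
  | succ n ih =>
    intro A
    obtain ⟨B, hB⟩ : X - C p ∣ (A - C (eval p A)) := dvd_iff_isRoot.mpr (by simp [IsRoot])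
    have hAz : ∀ z : ℂ, eval z A = eval p A + (z - p) * eval z B := by
      intro z
      have := congrArg (eval z) hB
      simp only [eval_sub, eval_C, eval_X, eval_mul] at this
      linear_combination this
    have hpt : (fun t => eval (γ t) P * (eval (γ t) A / (γ t - p) ^ (n + 1)))
        = fun t => eval p A * (eval (γ t) P / (γ t - p) ^ (n + 1))
          + eval (γ t) P * (eval (γ t) B / (γ t - p) ^ n) := by
      funext t
      have hz := hsub t
      rw [hAz (γ t)]
      field_simp
      ring
    have hcont1 : Continuous fun t => eval p A * (eval (γ t) P / (γ t - p) ^ (n + 1)) :=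
      continuous_const.mul (((P.continuous).comp hγ).div ((hγ.sub continuous_const).pow _)
        (fun t => pow_ne_zero _ (hsub t)))
    have hcont2 : Continuous fun t => eval (γ t) P * (eval (γ t) B / (γ t - p) ^ n) :=
      ((P.continuous).comp hγ).mul (((B.continuous).comp hγ).div
        ((hγ.sub continuous_const).pow _) (fun t => pow_ne_zero _ (hsub t)))
    rw [hpt, intervalIntegral.integral_add (hcont1.intervalIntegrable 0 T)
      (hcont2.intervalIntegrable 0 T), ih B, add_zero,
      intervalIntegral.integral_const_mul]
    have hpow : ∫ t in (0:ℝ)..T, eval (γ t) P / (γ t - p) ^ (n + 1) = 0 := by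
      cases n with
      | zero => simpa using hw
      | succ m => exact aux15_pow_int hode hper p havoid m
    rw [hpow, mul_zero]

lemma aux15_core (hode : ∀ t : ℝ, HasDerivAt γ (eval (γ t) P) t)
    (hper : Function.Periodic γ T) {ζ : ℂ}
    (havoidP : ∀ t, eval (γ t) P ≠ 0)
    (hw0 : ∀ p : ℂ, eval p P = 0 → p ≠ ζ → ∫ t in (0:ℝ)..T, eval (γ t) P / (γ t - p) = 0) :
    ∀ (n : ℕ) (Q A : Polynomial ℂ), Q.natDegree ≤ n → Q ≠ 0 →
      (∀ z : ℂ, eval z Q = 0 → eval z P = 0) → eval ζ Q ≠ 0 →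
      ∫ t in (0:ℝ)..T, eval (γ t) P * (eval (γ t) A / eval (γ t) Q) = 0 := by
  have hγ := aux15_cont hode
  have hconst : ∀ (Q A : Polynomial ℂ), Q.natDegree = 0 → Q ≠ 0 →
      ∫ t in (0:ℝ)..T, eval (γ t) P * (eval (γ t) A / eval (γ t) Q) = 0 := by
    intro Q A hd hQ0
    obtain ⟨c, hc⟩ := natDegree_eq_zero.mp hd
    have hc0 : c ≠ 0 := fun h => hQ0 (by rw [← hc, h, map_zero])
    have : (fun t => eval (γ t) P * (eval (γ t) A / eval (γ t) Q))
        = fun t => eval (γ t) P * eval (γ t) (Polynomial.C c⁻¹ * A) := by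
      funext t
      rw [← hc]
      simp [div_eq_inv_mul]
    rw [this]
    exact aux15_poly_int hode hper _
  intro n
  induction n with
  | zero =>
    intro Q A hdeg hQ0 hroots hζ
    exact hconst Q A (Nat.le_zero.mp hdeg) hQ0
  | succ n ih =>
    intro Q A hdeg hQ0 hroots hζ
    by_cases hd0 : Q.natDegree = 0
    · exact hconst Q A hd0 hQ0
    · obtain ⟨p, hp⟩ := Complex.exists_root (natDegree_pos_iff_degree_pos.mp (Nat.pos_of_ne_zero hd0))
      have hPp : eval p P = 0 := hroots p hp
      have hpζ : p ≠ ζ := fun h => hζ (h ▸ hp)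
      have havoidp : ∀ t, γ t ≠ p := fun t h => havoidP t (h ▸ hPp)
      have hsub : ∀ t : ℝ, γ t - p ≠ 0 := fun t => sub_ne_zero.mpr (havoidp t)
      set m := rootMultiplicity p Q with hm_def
      have hm : 0 < m := (rootMultiplicity_pos hQ0).mpr hp
      obtain ⟨Q₁, hfac, hndvd⟩ := Q.exists_eq_pow_rootMultiplicity_mul_and_not_dvd hQ0 p
      have hQ₁0 : Q₁ ≠ 0 := fun h => hQ0 (by rw [hfac, h, mul_zero])
      have hQev : ∀ z : ℂ, eval z Q = (z - p) ^ m * eval z Q₁ := by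
        intro z; rw [hfac]; simp [hm_def]
      have hQ₁roots : ∀ z : ℂ, eval z Q₁ = 0 → eval z P = 0 := by
        intro z hz; exact hroots z (by rw [hQev z, hz, mul_zero])
      have hQ₁ζ : eval ζ Q₁ ≠ 0 := by
        intro h; exact hζ (by rw [hQev ζ, h, mul_zero])
      have hQ₁γ : ∀ t : ℝ, eval (γ t) Q₁ ≠ 0 :=
        fun t h => havoidP t (hQ₁roots _ h)
      have hdeg1 : Q₁.natDegree ≤ n := by
        have := congrArg natDegree hfac
        rw [natDegree_mul (pow_ne_zero _ (X_sub_C_ne_zero p)) hQ₁0,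
          natDegree_pow, natDegree_X_sub_C, mul_one] at this
        omega
      have hco : IsCoprime ((X - C p) ^ m) Q₁ :=
        ((irreducible_X_sub_C p).coprime_iff_not_dvd.mpr hndvd).pow_left
      obtain ⟨u, v, huv⟩ := hco
      have hbez : ∀ z : ℂ, eval z u * (z - p) ^ m + eval z v * eval z Q₁ = 1 := by
        intro z
        have := congrArg (eval z) huv
        simpa using this
      have hpt : (fun t => eval (γ t) P * (eval (γ t) A / eval (γ t) Q))
          = fun t => eval (γ t) P * (eval (γ t) (A * u) / eval (γ t) Q₁)
            + eval (γ t) P * (eval (γ t) (A * v) / (γ t - p) ^ m) := by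
        funext t
        rw [hQev (γ t)]
        simp only [eval_mul]
        have h1 := hsub t
        have h2 := hQ₁γ t
        have h3 := hbez (γ t)
        have key : eval (γ t) A / ((γ t - p) ^ m * eval (γ t) Q₁)
            = eval (γ t) A * eval (γ t) u / eval (γ t) Q₁
              + eval (γ t) A * eval (γ t) v / (γ t - p) ^ m := by
          rw [div_add_div _ _ h2 (pow_ne_zero m h1), mul_comm ((γ t - p) ^ m)]
          congr 1
          linear_combination (-eval (γ t) A) * h3
        rw [key, mul_add]
      have hcont1 : Continuous fun t => eval (γ t) P * (eval (γ t) (A * u) / eval (γ t) Q₁) :=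
        ((P.continuous).comp hγ).mul ((((A*u).continuous).comp hγ).div
          ((Q₁.continuous).comp hγ) hQ₁γ)
      have hcont2 : Continuous fun t => eval (γ t) P * (eval (γ t) (A * v) / (γ t - p) ^ m) :=
        ((P.continuous).comp hγ).mul ((((A*v).continuous).comp hγ).div
          ((hγ.sub continuous_const).pow _) (fun t => pow_ne_zero _ (hsub t)))
      rw [hpt, intervalIntegral.integral_add (hcont1.intervalIntegrable 0 T)
        (hcont2.intervalIntegrable 0 T),
        ih Q₁ (A * u) hdeg1 hQ₁0 hQ₁roots hQ₁ζ,
        aux15_J hode hper p havoidp (hw0 p hPp hpζ) m (A * v), add_zero]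

end


lemma aux15_avoid {P : Polynomial ℂ} {γ : ℝ → ℂ}
    (hode : ∀ t : ℝ, HasDerivAt γ (eval (γ t) P) t)
    (hnonconst : ∃ t₁ t₂ : ℝ, γ t₁ ≠ γ t₂) :
    ∀ t : ℝ, eval (γ t) P ≠ 0 := by
  have hγ : Continuous γ := continuous_iff_continuousAt.mpr fun t => (hode t).continuousAt
  intro t₀ h0
  obtain ⟨t₁, t₂, hne⟩ := hnonconst
  set p := γ t₀ with hp
  have hall : ∀ s : ℝ, γ s = p := by
    intro s
    -- work on the interval [a, b]
    set a : ℝ := min s t₀ - 1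
    set b : ℝ := max s t₀ + 1
    have hab : t₀ ∈ Ioo a b := by
      constructor
      · have := min_le_right s t₀; simp only [a]; linarith
      · have := le_max_right s t₀; simp only [b]; linarith
    have hs : s ∈ Icc a b := by
      constructor
      · have := min_le_left s t₀; simp only [a]; linarith
      · have := le_max_left s t₀; simp only [b]; linarith
    -- bound the image
    obtain ⟨R, hR⟩ := (Metric.isBounded_iff_subset_closedBall 0).mp
      (isCompact_Icc.image hγ).isBounded
    -- Lipschitz bound on the closed ball
    obtain ⟨Cb, hCb⟩ := (isCompact_closedBall (0:ℂ) R).exists_bound_of_continuousOn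
      (P.derivative.continuous.continuousOn)
    have hlip : LipschitzOnWith Cb.toNNReal (fun z => eval z P) (Metric.closedBall 0 R) := by
      apply (convex_closedBall (0:ℂ) R).lipschitzOnWith_of_nnnorm_hasDerivWithin_le
        (f' := fun z => eval z P.derivative)
        (fun z _ => (P.hasDerivAt z).hasDerivWithinAt)
      intro z hz
      rw [← NNReal.coe_le_coe, coe_nnnorm, Real.coe_toNNReal']
      exact le_max_of_le_left (hCb z hz)
    have key := ODE_solution_unique_of_mem_Icc
      (v := fun _ z => eval z P) (s := fun _ => Metric.closedBall 0 R)
      (fun _ _ => hlip) hab hγ.continuousOn (fun t _ => hode t)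
      (fun t ht => hR ⟨t, Ioo_subset_Icc_self ht, rfl⟩)
      continuousOn_const
      (fun t _ => by rw [← hp, h0]; exact hasDerivAt_const t p)
      (fun t _ => hR ⟨t₀, Ioo_subset_Icc_self hab, rfl⟩)
      rfl
    exact key hs
  exact hne (by rw [hall t₁, hall t₂])

/-- Let `γ` be a nonconstant `T`-periodic solution (`T > 0`) of
`γ'(t) = P(γ(t))` for a complex polynomial `P`, and let `ζ` be a simple zero of `P`
around which the loop `γ|[0,T]` has winding number `1`, while it has winding number `0`
around every other zero of `P`. (The winding number around `ζ'` is
`(1/(2πi))·∫₀ᵀ γ'(t)/(γ(t) - ζ') dt`, and `γ' = P ∘ γ`.) Then `T = 2πi/P'(ζ)`. -/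

theorem period_eq_two_pi_I_div_deriv (P : Polynomial ℂ) (γ : ℝ → ℂ)
    (hode : ∀ t : ℝ, HasDerivAt γ (P.eval (γ t)) t)
    (hnonconst : ∃ t₁ t₂ : ℝ, γ t₁ ≠ γ t₂)
    (T : ℝ) (hT : 0 < T) (hper : Function.Periodic γ T)
    (ζ : ℂ) (hzero : P.eval ζ = 0) (hsimple : P.derivative.eval ζ ≠ 0)
    (hwind1 : (2 * (Real.pi : ℂ) * Complex.I)⁻¹ *
        ∫ t in (0:ℝ)..T, P.eval (γ t) / (γ t - ζ) = 1)
    (hwind0 : ∀ ζ' : ℂ, P.eval ζ' = 0 → ζ' ≠ ζ →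
        (2 * (Real.pi : ℂ) * Complex.I)⁻¹ *
          ∫ t in (0:ℝ)..T, P.eval (γ t) / (γ t - ζ') = 0) :
    (T : ℂ) = 2 * (Real.pi : ℂ) * Complex.I / P.derivative.eval ζ := by
  have hγ : Continuous γ := aux15_cont hode
  have havoidP : ∀ t, eval (γ t) P ≠ 0 := aux15_avoid hode hnonconst
  have hc : (2 * (Real.pi : ℂ) * Complex.I) ≠ 0 := by
    simp [Real.pi_ne_zero, Complex.I_ne_zero, Complex.ofReal_ne_zero]
  have hW1 : ∫ t in (0:ℝ)..T, eval (γ t) P / (γ t - ζ) = 2 * (Real.pi : ℂ) * Complex.I :=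
    ((inv_mul_eq_one₀ hc).mp hwind1).symm
  have hw0 : ∀ p : ℂ, eval p P = 0 → p ≠ ζ →
      ∫ t in (0:ℝ)..T, eval (γ t) P / (γ t - p) = 0 := by
    intro p hp hne
    have := hwind0 p hp hne
    exact (mul_eq_zero.mp this).resolve_left (inv_ne_zero hc)
  have havoidζ : ∀ t, γ t ≠ ζ := fun t h => havoidP t (h ▸ hzero)
  have hsubζ : ∀ t : ℝ, γ t - ζ ≠ 0 := fun t => sub_ne_zero.mpr (havoidζ t)
  -- factor P = (X - C ζ) * Q₀
  obtain ⟨Q₀, hQ₀⟩ : (X - C ζ) ∣ P := dvd_iff_isRoot.mpr hzero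
  have hPz : ∀ z : ℂ, eval z P = (z - ζ) * eval z Q₀ := by
    intro z; rw [hQ₀]; simp
  have hQ₀ζ : eval ζ Q₀ = eval ζ (derivative P) := by
    have := congrArg (fun q => eval ζ (derivative q)) hQ₀
    simp only [derivative_mul, derivative_sub, derivative_X, derivative_C, sub_zero,
      eval_add, eval_mul, eval_sub, eval_X, eval_C, sub_self, zero_mul, mul_zero,
      one_mul, eval_one, add_zero, zero_add] at this
    exact this.symm
  have hQ₀ζ' : eval ζ Q₀ ≠ 0 := by rw [hQ₀ζ]; exact hsimple
  have hQ₀0 : Q₀ ≠ 0 := fun h => hQ₀ζ' (by rw [h, eval_zero])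
  have hQ₀roots : ∀ z : ℂ, eval z Q₀ = 0 → eval z P = 0 := by
    intro z hz; rw [hPz z, hz, mul_zero]
  have hQ₀γ : ∀ t : ℝ, eval (γ t) Q₀ ≠ 0 := fun t h => havoidP t (hQ₀roots _ h)
  -- Bezout
  have hndvd : ¬(X - C ζ) ∣ Q₀ := fun h => hQ₀ζ' (dvd_iff_isRoot.mp h)
  obtain ⟨u, v, huv⟩ := (irreducible_X_sub_C ζ).coprime_iff_not_dvd.mpr hndvd
  have hbez : ∀ z : ℂ, eval z u * (z - ζ) + eval z v * eval z Q₀ = 1 := by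
    intro z
    have := congrArg (eval z) huv
    simpa using this
  have hvζ : eval ζ v = (eval ζ (derivative P))⁻¹ := by
    have h := hbez ζ
    rw [sub_self, mul_zero, zero_add, hQ₀ζ] at h
    field_simp
    linear_combination h
  -- split v along ζ
  obtain ⟨w, hw⟩ : (X - C ζ) ∣ (v - C (eval ζ v)) := dvd_iff_isRoot.mpr (by simp [IsRoot])
  have hvz : ∀ z : ℂ, eval z v = eval ζ v + (z - ζ) * eval z w := by
    intro z
    have := congrArg (eval z) hw
    simp only [eval_sub, eval_C, eval_X, eval_mul] at this
    linear_combination this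
  -- pointwise decomposition of 1
  have hpt : (fun _ : ℝ => (1:ℂ))
      = fun t => eval (γ t) P * (eval (γ t) u / eval (γ t) Q₀)
        + eval ζ v * (eval (γ t) P / (γ t - ζ))
        + eval (γ t) P * eval (γ t) w := by
    funext t
    have h1 := hsubζ t
    have h2 := hQ₀γ t
    have h3 := hbez (γ t)
    have h4 := hvz (γ t)
    have e1 : (γ t - ζ) * eval (γ t) Q₀ * (eval (γ t) u / eval (γ t) Q₀)
        = (γ t - ζ) * eval (γ t) u := by
      field_simp
    have e2 : eval ζ v * ((γ t - ζ) * eval (γ t) Q₀ / (γ t - ζ))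
        = eval ζ v * eval (γ t) Q₀ := by
      rw [mul_comm (γ t - ζ), mul_div_assoc, div_self h1, mul_one]
    rw [hPz (γ t), e1, e2]
    linear_combination -h3 + eval (γ t) Q₀ * h4
  -- integrate
  have hcont1 : Continuous fun t => eval (γ t) P * (eval (γ t) u / eval (γ t) Q₀) :=
    ((P.continuous).comp hγ).mul (((u.continuous).comp hγ).div ((Q₀.continuous).comp hγ) hQ₀γ)
  have hcont2 : Continuous fun t => eval ζ v * (eval (γ t) P / (γ t - ζ)) :=
    continuous_const.mul (((P.continuous).comp hγ).div (hγ.sub continuous_const) hsubζ)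
  have hcont3 : Continuous fun t => eval (γ t) P * eval (γ t) w :=
    ((P.continuous).comp hγ).mul ((w.continuous).comp hγ)
  have hint : ∫ t in (0:ℝ)..T, (1:ℂ)
      = (∫ t in (0:ℝ)..T, eval (γ t) P * (eval (γ t) u / eval (γ t) Q₀))
        + (∫ t in (0:ℝ)..T, eval ζ v * (eval (γ t) P / (γ t - ζ)))
        + (∫ t in (0:ℝ)..T, eval (γ t) P * eval (γ t) w) := by
    rw [hpt, intervalIntegral.integral_add ((show Continuous fun t => eval (γ t) P * (eval (γ t) u / eval (γ t) Q₀) + eval ζ v * (eval (γ t) P / (γ t - ζ)) from hcont1.add hcont2).intervalIntegrable 0 T)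
      (hcont3.intervalIntegrable 0 T),
      intervalIntegral.integral_add (hcont1.intervalIntegrable 0 T)
      (hcont2.intervalIntegrable 0 T)]
  have e1 : ∫ t in (0:ℝ)..T, eval (γ t) P * (eval (γ t) u / eval (γ t) Q₀) = 0 :=
    aux15_core hode hper havoidP hw0 Q₀.natDegree Q₀ u le_rfl hQ₀0 hQ₀roots hQ₀ζ'
  have e2 : ∫ t in (0:ℝ)..T, eval ζ v * (eval (γ t) P / (γ t - ζ))
      = eval ζ v * (2 * (Real.pi : ℂ) * Complex.I) := by
    rw [intervalIntegral.integral_const_mul, hW1]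
  have e3 : ∫ t in (0:ℝ)..T, eval (γ t) P * eval (γ t) w = 0 :=
    aux15_poly_int hode hper w
  have hTeq : (T : ℂ) = eval ζ v * (2 * (Real.pi : ℂ) * Complex.I) := by
    have h1T : ∫ t in (0:ℝ)..T, (1:ℂ) = (T : ℂ) := by simp
    rw [← h1T, hint, e1, e2, e3, zero_add, add_zero]
  rw [hTeq, hvζ, div_eq_mul_inv, mul_comm]
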